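/- arXiv:2602.21674 — 5 statements merged into one kernel-verified Lean document; each statement's English description precedes it below -/
import Mathlib

section
/- Two e-persistent Mealy machines with the same input alphabet that agree (produce equal output words) on every input word in which the output contains at most one occurrence of e, agree on all input words. More precisely: if H and M are e-persistent and for every input word σ such that the output λ^H(σ) does not contain e·e as a factor we have λ^H(σ) = λ^M(σ), then λ^H(σ) = λ^M(σ) for all σ ∈ I*. -/
structure Mealy (I O : Type) where
  Q : Type
  q0 : Q
  trans : Q → I → Q
  out1 : Q → I → O

namespace Mealy

variable {I O : Type}

def run (M : Mealy I O) : M.Q → List I → M.Q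
  | q, [] => q
  | q, i :: σ => M.run (M.trans q i) σ

def out (M : Mealy I O) : M.Q → List I → List O
  | _, [] => []
  | q, i :: σ => M.out1 q i :: M.out (M.trans q i) σ

/-- `M` is `e`-persistent: once the output word ends in `e`, appending any
input keeps the last output equal to `e`. -/
def EPersistent (M : Mealy I O) (e : O) : Prop :=
  ∀ (σ : List I) (i : I),
    (M.out M.q0 σ).getLast? = some e →
    (M.out M.q0 (σ ++ [i])).getLast? = some e

end Mealy

namespace Mealy

variable {I O : Type}

lemma out_append' {M : Mealy I O} (q : M.Q) (σ τ : List I) :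
    M.out q (σ ++ τ) = M.out q σ ++ M.out (M.run q σ) τ := by
  induction σ generalizing q with
  | nil => simp [Mealy.out, Mealy.run]
  | cons i σ ih => simp [Mealy.out, Mealy.run, ih]

lemma length_out' {M : Mealy I O} (q : M.Q) (σ : List I) :
    (M.out q σ).length = σ.length := by
  induction σ generalizing q with
  | nil => rfl
  | cons i σ ih => simp [Mealy.out, ih]

lemma persist {M : Mealy I O} {e : O} (h : M.EPersistent e) (σ τ : List I)
    (hσ : (M.out M.q0 σ).getLast? = some e) :
    (M.out M.q0 (σ ++ τ)).getLast? = some e := by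
  induction τ using List.reverseRecOn with
  | nil => simpa using hσ
  | append_singleton τ i ih =>
    have := h (σ ++ τ) i ih
    simpa [List.append_assoc] using this

lemma out_take {M : Mealy I O} (σ : List I) (k : ℕ) :
    M.out M.q0 (σ.take k) = (M.out M.q0 σ).take k := by
  by_cases hk : k ≤ σ.length
  · have hσ : σ = σ.take k ++ σ.drop k := (List.take_append_drop k σ).symm
    conv_rhs => rw [hσ]
    rw [out_append']
    rw [List.take_append]
    have hlen : (M.out M.q0 (σ.take k)).length = k := by
      rw [length_out', List.length_take]; omega
    simp [hlen]
  · push_neg at hk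
    rw [List.take_of_length_le (by omega), List.take_of_length_le (by rw [length_out']; omega)]

end Mealy


/-- Two `e`-persistent Mealy machines over the same input alphabet that agree
on every input word whose `H`-output does not contain `e·e` as a factor agree
on all input words. -/
theorem stmt1 {I O : Type} (H M : Mealy I O) (e : O)
    (hH : H.EPersistent e) (hM : M.EPersistent e)
    (hagree : ∀ σ : List I, ¬ ([e, e] <:+: H.out H.q0 σ) →
      H.out H.q0 σ = M.out M.q0 σ) :
    ∀ σ : List I, H.out H.q0 σ = M.out M.q0 σ := by
  intro σ
  induction σ using List.reverseRecOn with
  | nil => rfl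
  | append_singleton σ i ih =>
    by_cases hc : [e, e] <:+: H.out H.q0 (σ ++ [i])
    · obtain ⟨a, b, hab⟩ := hc
      set k := a.length with hk
      have hHdec : H.out H.q0 (σ ++ [i])
          = H.out H.q0 σ ++ [H.out1 (H.run H.q0 σ) i] := by
        rw [Mealy.out_append']; rfl
      have hMdec : M.out M.q0 (σ ++ [i])
          = M.out M.q0 σ ++ [M.out1 (M.run M.q0 σ) i] := by
        rw [Mealy.out_append']; rfl
      have hlenσ : (H.out H.q0 σ).length = σ.length := Mealy.length_out' _ _
      have hklen : k + 1 ≤ σ.length := by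
        have := congrArg List.length hab
        simp [hHdec] at this
        omega
      -- the prefix of length k+1 of σ has H-output ending in e
      have htake : H.out H.q0 (σ.take (k+1)) = a ++ [e] := by
        rw [Mealy.out_take]
        have h1 : (a ++ [e, e] ++ b).take (k+1) = a ++ [e] := by
          rw [show a ++ [e, e] ++ b = (a ++ [e]) ++ (e :: b) by simp,
            List.take_append]
          simp [hk]
        have h2 : (a ++ [e, e] ++ b).take (k+1) = (H.out H.q0 σ).take (k+1) := by
          rw [hab, hHdec, List.take_append]
          have : k + 1 - (H.out H.q0 σ).length = 0 := by omega
          simp [this]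
        rw [← h2, h1]
      have htakeLast : (H.out H.q0 (σ.take (k+1))).getLast? = some e := by
        rw [htake]; simp
      -- H's output on σ ends with e
      have hHσ : (H.out H.q0 σ).getLast? = some e := by
        have := Mealy.persist hH (σ.take (k+1)) (σ.drop (k+1)) htakeLast
        simpa using this
      -- hence H's output on σ ++ [i] ends with e
      have hHζ : (H.out H.q0 (σ ++ [i])).getLast? = some e := hH σ i hHσ
      -- M's output on σ ends with e (by IH), so M's output on σ ++ [i] ends with e
      have hMσ : (M.out M.q0 σ).getLast? = some e := by rw [← ih]; exact hHσ
      have hMζ : (M.out M.q0 (σ ++ [i])).getLast? = some e := hM σ i hMσ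
      rw [hHdec, hMdec, ih]
      rw [hHdec] at hHζ; rw [hMdec] at hMζ
      simp only [List.getLast?_concat, Option.some.injEq] at hHζ hMζ
      rw [hHζ, hMζ]
    · exact hagree _ hc
end

section
/- Let H be an e-persistent Mealy machine, C a fault domain, T a test suite complete for H w.r.t. C, and L ⊆ I* a reference language that is sound for H and for every machine in C (i.e., every word not in L produces an output ending in e). Then the sound test suite T_S(H,L), obtained by truncating each σ ∈ T to its longest prefix in L when that prefix is shorter than the point where H first outputs e, and otherwise applying the e-truncation filter, is complete for H w.r.t. the e-persistent subdomain C_e. -/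
lemma Mealy.out_length {I O : Type} (M : Mealy I O) :
    ∀ (σ : List I) (q : M.Q), (M.out q σ).length = σ.length
  | [], _ => rfl
  | i :: σ, q => by simp [Mealy.out, Mealy.out_length M σ]

lemma Mealy.out_take_s3 {I O : Type} (M : Mealy I O) : ∀ (σ : List I) (q : M.Q) (k : ℕ),
    M.out q (σ.take k) = (M.out q σ).take k
  | [], q, k => by simp [Mealy.out]
  | i :: σ, q, 0 => by simp [Mealy.out]
  | i :: σ, q, (k+1) => by simp [Mealy.out, Mealy.out_take_s3 M σ]

lemma getLast?_take_succ {α : Type*} (l : List α) (k : ℕ) (h : k < l.length) :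
    (l.take (k+1)).getLast? = l[k]? := by
  rw [List.getLast?_eq_getElem?]
  have hlen : (l.take (k+1)).length = k + 1 := by
    simp [Nat.succ_le_of_lt h]
  rw [hlen]
  simp [List.getElem?_take, Nat.lt_succ_self]

lemma persist_getElem {I O : Type} {M : Mealy I O} {e : O} (hM : M.EPersistent e)
    (σ : List I) (j : ℕ) (hj : (M.out M.q0 σ)[j]? = some e) :
    ∀ k, j ≤ k → k < σ.length → (M.out M.q0 σ)[k]? = some e := by
  intro k
  induction k with
  | zero =>
    intro hjk _
    have : j = 0 := Nat.le_zero.mp hjk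
    subst this; exact hj
  | succ k ih =>
    intro hjk hk
    rcases Nat.eq_or_lt_of_le hjk with h | h
    · subst h; exact hj
    · have hk' : k < σ.length := Nat.lt_of_succ_lt hk
      have hout_k : (M.out M.q0 σ)[k]? = some e := ih (Nat.lt_succ_iff.mp h) hk'
      have h1 : (M.out M.q0 (σ.take (k+1))).getLast? = some e := by
        rw [Mealy.out_take_s3, getLast?_take_succ _ _ (by rw [Mealy.out_length]; exact hk')]
        exact hout_k
      have h2 := hM (σ.take (k+1)) (σ.get ⟨k+1, hk⟩) h1
      have h3 : σ.take (k+1) ++ [σ.get ⟨k+1, hk⟩] = σ.take (k+2) := by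
        rw [List.take_succ (i := k+1)]
        congr 1
        simp [List.getElem?_eq_getElem hk]
      rw [h3, Mealy.out_take_s3,
        getLast?_take_succ _ (k+1) (by rw [Mealy.out_length]; exact hk)] at h2
      exact h2

lemma eq_of_prefix_and_tail {α : Type*} (l₁ l₂ : List α) (e : α) (m : ℕ)
    (hlen : l₁.length = l₂.length)
    (hpre : l₁.take m = l₂.take m)
    (h1 : ∀ k, m ≤ k → k < l₁.length → l₁[k]? = some e)
    (h2 : ∀ k, m ≤ k → k < l₂.length → l₂[k]? = some e) : l₁ = l₂ := by
  apply List.ext_getElem?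
  intro k
  by_cases hk : k < l₁.length
  · by_cases hkm : k < m
    · have := congrArg (fun l => l[k]?) hpre
      simpa [List.getElem?_take, hkm] using this
    · rw [h1 k (le_of_not_gt hkm) hk, h2 k (le_of_not_gt hkm) (hlen ▸ hk)]
  · rw [List.getElem?_eq_none (le_of_not_gt hk),
      List.getElem?_eq_none (le_of_not_gt (fun h => hk (hlen ▸ h)))]

def FirstError {I O : Type} (H : Mealy I O) (e : O) (σ : List I) (i : ℕ) : Prop :=
  (H.out H.q0 σ)[i]? ≠ some e ∧ (H.out H.q0 σ)[i + 1]? = some e ∧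
    ∀ j < i, ¬ ((H.out H.q0 σ)[j]? ≠ some e ∧ (H.out H.q0 σ)[j + 1]? = some e)

/-- `i` is the position of the first error w.r.t. the reference language `L`:
the length-`i` prefix of `σ` is in `L`, the length-`(i+1)` prefix is not, and
no earlier index has this property. -/
def FirstErrorL {I : Type} (L : Set (List I)) (σ : List I) (i : ℕ) : Prop :=
  σ.take i ∈ L ∧ σ.take (i + 1) ∉ L ∧
    ∀ j < i, ¬ (σ.take j ∈ L ∧ σ.take (j + 1) ∉ L)

/-- `L` is a sound reference for `M`: every word outside `L` produces an
output ending in `e`. -/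
def SoundRef {I O : Type} (L : Set (List I)) (M : Mealy I O) (e : O) : Prop :=
  ∀ σ ∉ L, (M.out M.q0 σ).getLast? = some e

/-- The sound test suite `T_S(H,L)`: each `σ ∈ T` is truncated to its longest
prefix in `L` when `firstError(L,σ) = i < ∞` and `i ≤ firstError(H,σ)`, and
otherwise the `e`-truncation filter `f_e(H,·)` is applied. -/
def fsSet {I O : Type} (H : Mealy I O) (e : O) (L : Set (List I))
    (T : Set (List I)) : Set (List I) :=
  { τ | ∃ σ ∈ T,
      (∃ i : ℕ, FirstErrorL L σ i ∧ (∀ j : ℕ, FirstError H e σ j → i ≤ j) ∧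
        τ = σ.take i) ∨
      ((¬ ∃ i : ℕ, FirstErrorL L σ i ∧ ∀ j : ℕ, FirstError H e σ j → i ≤ j) ∧
        ((∃ i : ℕ, FirstError H e σ i ∧ τ = σ.take (i + 2)) ∨
         ((¬ ∃ i : ℕ, FirstError H e σ i) ∧ τ = σ))) }

def TestComplete {I O : Type} (H : Mealy I O) (T : Set (List I))
    (C : Set (Mealy I O)) : Prop :=
  ∀ M ∈ C, (∀ σ ∈ T, H.out H.q0 σ = M.out M.q0 σ) →
    ∀ σ : List I, H.out H.q0 σ = M.out M.q0 σ

/-- If `H` is `e`-persistent, `T` is complete for `H` w.r.t. `C`, and the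
reference `L` is sound for `H` and for every machine in `C`, then the sound
test suite `T_S(H,L)` is complete for `H` w.r.t. the `e`-persistent
subdomain `C_e`. -/
theorem stmt3 {I O : Type} (H : Mealy I O) (e : O) (L : Set (List I))
    (T : Set (List I)) (C : Set (Mealy I O))
    (hH : H.EPersistent e)
    (hT : TestComplete H T C)
    (hSoundH : SoundRef L H e)
    (hSoundC : ∀ M ∈ C, SoundRef L M e) :
    TestComplete H (fsSet H e L T) {M | M ∈ C ∧ M.EPersistent e} := by
  intro M hM hagree σ0
  obtain ⟨hMC, hMpers⟩ := hM
  refine hT M hMC ?_ σ0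
  intro σ hσT
  by_cases hA : ∃ i : ℕ, FirstErrorL L σ i ∧ ∀ j : ℕ, FirstError H e σ j → i ≤ j
  · obtain ⟨i, hiL, hile⟩ := hA
    have hτ : σ.take i ∈ fsSet H e L T := ⟨σ, hσT, Or.inl ⟨i, hiL, hile, rfl⟩⟩
    have heq := hagree _ hτ
    by_cases hin : i < σ.length
    · have hnot := hiL.2.1
      have hH' := hSoundH _ hnot
      have hM' := hSoundC M hMC _ hnot
      have hHi : (H.out H.q0 σ)[i]? = some e := by
        rw [Mealy.out_take_s3, getLast?_take_succ _ i
          (by rw [Mealy.out_length]; exact hin)] at hH'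
        exact hH'
      have hMi : (M.out M.q0 σ)[i]? = some e := by
        rw [Mealy.out_take_s3, getLast?_take_succ _ i
          (by rw [Mealy.out_length]; exact hin)] at hM'
        exact hM'
      refine eq_of_prefix_and_tail _ _ e i ?_ ?_ ?_ ?_
      · rw [Mealy.out_length, Mealy.out_length]
      · rw [← Mealy.out_take_s3, ← Mealy.out_take_s3]; exact heq
      · intro k hk1 hk2
        exact persist_getElem hH σ i hHi k hk1 (by rwa [Mealy.out_length] at hk2)
      · intro k hk1 hk2
        exact persist_getElem hMpers σ i hMi k hk1 (by rwa [Mealy.out_length] at hk2)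
    · have hσeq : σ.take i = σ := List.take_of_length_le (le_of_not_gt hin)
      rwa [hσeq] at heq
  · by_cases hB : ∃ i : ℕ, FirstError H e σ i
    · obtain ⟨i, hFE⟩ := hB
      have hτ : σ.take (i+2) ∈ fsSet H e L T :=
        ⟨σ, hσT, Or.inr ⟨hA, Or.inl ⟨i, hFE, rfl⟩⟩⟩
      have heq := hagree _ hτ
      have hHi : (H.out H.q0 σ)[i+1]? = some e := by
        exact hFE.2.1
      have hin : i + 1 < σ.length := by
        rw [← Mealy.out_length H σ H.q0]
        obtain ⟨h, -⟩ := List.getElem?_eq_some_iff.mp hHi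
        exact h
      have htakeq : (H.out H.q0 σ).take (i+2) = (M.out M.q0 σ).take (i+2) := by
        rw [← Mealy.out_take_s3, ← Mealy.out_take_s3]; exact heq
      have hMi : (M.out M.q0 σ)[i+1]? = some e := by
        have h' := congrArg (fun l => l[i+1]?) htakeq
        simp only [List.getElem?_take, Nat.lt_succ_self,
          show i+1 < i+2 by omega, if_pos] at h'
        rw [← h']; exact hHi
      refine eq_of_prefix_and_tail _ _ e (i+2) ?_ htakeq ?_ ?_
      · rw [Mealy.out_length, Mealy.out_length]
      · intro k hk1 hk2
        exact persist_getElem hH σ (i+1) hHi k (by omega)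
          (by rwa [Mealy.out_length] at hk2)
      · intro k hk1 hk2
        exact persist_getElem hMpers σ (i+1) hMi k (by omega)
          (by rwa [Mealy.out_length] at hk2)
    · have hτ : σ ∈ fsSet H e L T := ⟨σ, hσT, Or.inr ⟨hA, Or.inr ⟨hB, rfl⟩⟩⟩
      exact hagree _ hτ
end

section
/- Suppose L is a sound reference for Mealy machine M (every word outside L produces an output ending in e in M), H is a Mealy machine such that H and M agree on all words of L, and H sends every word outside L to an output ending in e (in particular all words outside L yield output e in both machines at their final positions, and both machines are e-persistent). Then H and M are equivalent, i.e., λ^H(σ) = λ^M(σ) for all σ ∈ I*. -/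
lemma Mealy.out_append {I O : Type} (M : Mealy I O) :
    ∀ (σ τ : List I) (q : M.Q), M.out q (σ ++ τ) = M.out q σ ++ M.out (M.run q σ) τ
  | [], τ, q => rfl
  | i :: σ, τ, q => by simp [Mealy.out, Mealy.run, Mealy.out_append M σ τ]

/-- If `L` is an `e`-persistent reference that is sound for both the
`e`-persistent machines `H` and `M`, and `H` and `M` are `L`-equivalent, then
`H` and `M` are equivalent on all input words. -/
theorem stmt6 {I O : Type} (H M : Mealy I O) (e : O) (L : Set (List I))
    (hLpers : ∀ (σ : List I) (i : I), σ ∉ L → σ ++ [i] ∉ L)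
    (hHpers : H.EPersistent e) (hMpers : M.EPersistent e)
    (hsoundH : ∀ σ ∉ L, (H.out H.q0 σ).getLast? = some e)
    (hsoundM : ∀ σ ∉ L, (M.out M.q0 σ).getLast? = some e)
    (hagree : ∀ σ ∈ L, H.out H.q0 σ = M.out M.q0 σ) :
    ∀ σ : List I, H.out H.q0 σ = M.out M.q0 σ := by
  intro σ
  induction σ using List.reverseRecOn with
  | nil => rfl
  | append_singleton σ i ih =>
    by_cases h : σ ++ [i] ∈ L
    · exact hagree _ h
    · have hH := hsoundH _ h
      have hM := hsoundM _ h
      rw [Mealy.out_append] at hH hM ⊢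
      simp only [Mealy.out, List.getLast?_append, List.getLast?_singleton,
        Option.or, Option.some.injEq] at hH hM
      rw [ih]
      rw [Mealy.out_append]; simp [Mealy.out, hH, hM]
end

section
/- S-apartness with respect to a sound reference refines ordinary apartness when the reference is sound for the underlying machine: if T is an observation tree for an e-persistent Mealy machine M, L is sound for M, and two tree states p, q are S-apart with respect to L, then the states m(p) and m(q) of M that they map to are not equivalent in M (there is an input word on which m(p) and m(q) produce different outputs). -/
structure PMealy (I O : Type) where
  Q : Type
  q0 : Q
  trans : Q → I → Option Q
  out1 : Q → I → Option O

namespace PMealy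

variable {I O : Type}

def pout (M : PMealy I O) : M.Q → List I → Option (List O)
  | _, [] => some []
  | q, i :: σ =>
    match M.out1 q i, M.trans q i with
    | some o, some q' => (M.pout q' σ).map (o :: ·)
    | _, _ => none

def prun (M : PMealy I O) : M.Q → List I → Option M.Q
  | q, [] => some q
  | q, i :: σ =>
    match M.trans q i with
    | some q' => M.prun q' σ
    | none => none

/-- States `p` and `q` are apart: some input word on which both outputs are
defined produces different output words. -/
def Apart (M : PMealy I O) (p q : M.Q) : Prop :=
  ∃ (σ : List I) (a b : List O),
    M.pout p σ = some a ∧ M.pout q σ = some b ∧ a ≠ b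

end PMealy

/-- Tree states `p, q` are `S`-apart w.r.t. the reference `L`: there is a
word `σ` on which the defined tree outputs differ, or the output from one
state is defined with last symbol different from `e` while the access word of
the other state extended by `σ` lies outside `L`. -/
def SApart {I O : Type} (T : PMealy I O) (e : O) (L : Set (List I))
    (acc : T.Q → List I) (p q : T.Q) : Prop :=
  ∃ σ : List I,
    (∃ a b : List O, T.pout p σ = some a ∧ T.pout q σ = some b ∧ a ≠ b) ∨
    (∃ (a : List O) (x : O), T.pout p σ = some a ∧ a.getLast? = some x ∧
      x ≠ e ∧ acc q ++ σ ∉ L) ∨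
    (∃ (b : List O) (x : O), T.pout q σ = some b ∧ b.getLast? = some x ∧
      x ≠ e ∧ acc p ++ σ ∉ L)


lemma stmt8_out_append {I O : Type} (M : Mealy I O) : ∀ (w σ : List I) (r : M.Q),
    M.out r (w ++ σ) = M.out r w ++ M.out (M.run r w) σ := by
  intro w
  induction w with
  | nil => intro σ r; simp [Mealy.out, Mealy.run]
  | cons i w ih => intro σ r; simp [Mealy.out, Mealy.run, ih]

lemma stmt8_out_length {I O : Type} (M : Mealy I O) : ∀ (σ : List I) (r : M.Q),
    (M.out r σ).length = σ.length := by
  intro σ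
  induction σ with
  | nil => intro r; rfl
  | cons i σ ih => intro r; simp [Mealy.out, ih]

lemma stmt8_pout_out {I O : Type} (M : Mealy I O) (T : PMealy I O)
    (m : T.Q → M.Q)
    (hobs : ∀ (q : T.Q) (i : I) (q' : T.Q), T.trans q i = some q' →
      M.trans (m q) i = m q' ∧ T.out1 q i = some (M.out1 (m q) i)) :
    ∀ (σ : List I) (p : T.Q) (a : List O), T.pout p σ = some a →
      M.out (m p) σ = a := by
  intro σ
  induction σ with
  | nil => intro p a h; simp [PMealy.pout] at h; simp [Mealy.out, h]
  | cons i σ ih =>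
    intro p a h
    cases hout : T.out1 p i with
    | none => simp [PMealy.pout, hout] at h
    | some o =>
      cases htr : T.trans p i with
      | none => simp [PMealy.pout, hout, htr] at h
      | some p' =>
        simp [PMealy.pout, hout, htr] at h
        obtain ⟨a', ha', rfl⟩ := h
        obtain ⟨h1, h2⟩ := hobs p i p' htr
        rw [hout] at h2
        have h3 : M.out1 (m p) i = o := (Option.some_injective _ h2).symm
        simp [Mealy.out, h1, h3, ih p' a' ha']

lemma stmt8_prun_run {I O : Type} (M : Mealy I O) (T : PMealy I O)
    (m : T.Q → M.Q)
    (hobs : ∀ (q : T.Q) (i : I) (q' : T.Q), T.trans q i = some q' →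
      M.trans (m q) i = m q' ∧ T.out1 q i = some (M.out1 (m q) i)) :
    ∀ (w : List I) (t q : T.Q), T.prun t w = some q →
      M.run (m t) w = m q := by
  intro w
  induction w with
  | nil => intro t q h; simp [PMealy.prun] at h; simp [Mealy.run, h]
  | cons i w ih =>
    intro t q h
    cases htr : T.trans t i with
    | none => simp [PMealy.prun, htr] at h
    | some t' =>
      simp [PMealy.prun, htr] at h
      obtain ⟨h1, _⟩ := hobs t i t' htr
      simp [Mealy.run, h1, ih t' q h]

/-- If `T` is an observation tree for the `e`-persistent machine `M`, `L` is
sound for `M`, and tree states `p, q` are `S`-apart w.r.t. `L`, then the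
states `m p` and `m q` of `M` are inequivalent. -/
theorem stmt8 {I O : Type} (M : Mealy I O) (e : O) (T : PMealy I O)
    (m : T.Q → M.Q) (acc : T.Q → List I)
    (hroot : m T.q0 = M.q0)
    (hobs : ∀ (q : T.Q) (i : I) (q' : T.Q), T.trans q i = some q' →
      M.trans (m q) i = m q' ∧ T.out1 q i = some (M.out1 (m q) i))
    (hacc : ∀ q : T.Q, T.prun T.q0 (acc q) = some q)
    (hpers : M.EPersistent e)
    (L : Set (List I))
    (hsound : ∀ σ ∉ L, (M.out M.q0 σ).getLast? = some e)
    (p q : T.Q) (hap : SApart T e L acc p q) :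
    ∃ σ : List I, M.out (m p) σ ≠ M.out (m q) σ := by
  obtain ⟨σ, hcase⟩ := hap
  -- common argument for the asymmetric cases
  have key : ∀ (r s : T.Q) (a : List O) (x : O), T.pout r σ = some a →
      a.getLast? = some x → x ≠ e → acc s ++ σ ∉ L →
      M.out (m r) σ ≠ M.out (m s) σ := by
    intro r s a x hpo hlast hxe hnotL hEq
    have hra : M.out (m r) σ = a := stmt8_pout_out M T m hobs σ r a hpo
    have hs := hsound _ hnotL
    rw [stmt8_out_append] at hs
    have hrun : M.run M.q0 (acc s) = m s := by
      have := stmt8_prun_run M T m hobs (acc s) T.q0 s (hacc s)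
      rwa [hroot] at this
    rw [hrun] at hs
    have hane : a ≠ [] := by rintro rfl; simp at hlast
    have hσne : σ ≠ [] := by
      rintro rfl
      exact hane (by simpa [Mealy.out] using hra.symm)
    have hsne : M.out (m s) σ ≠ [] := by
      intro h
      have := stmt8_out_length M σ (m s)
      rw [h] at this
      exact hσne (List.eq_nil_of_length_eq_zero this.symm)
    rw [List.getLast?_append_of_ne_nil _ hsne] at hs
    rw [← hEq, hra] at hs
    rw [hlast] at hs
    exact hxe (Option.some_injective _ hs)
  rcases hcase with ⟨a, b, hpa, hqb, hab⟩ | ⟨a, x, hpa, hlast, hxe, hnotL⟩ |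
      ⟨b, x, hqb, hlast, hxe, hnotL⟩
  · exact ⟨σ, by
      rw [stmt8_pout_out M T m hobs σ p a hpa, stmt8_pout_out M T m hobs σ q b hqb]
      exact hab⟩
  · exact ⟨σ, key p q a x hpa hlast hxe hnotL⟩
  · exact ⟨σ, fun h => key q p b x hqb hlast hxe hnotL h.symm⟩
end

section
/- Promotion strictly increases the learner's norm: moving an isolated frontier state r (apart from every basis state) into the basis increases N_e by at least 1. Specifically, if B' = B ∪ {r}, then the quadratic term increases by |B| + 1, while the apartness term decreases by at most |B|, so N_e(T') ≥ N_e(T) + 1. -/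
attribute [local instance] Classical.propDecidable

/-- The norm used by the `L#_e` learner on an observation tree with basis `B`
and frontier `F`. -/
noncomputable def normE {I O : Type} [Fintype I] (T : PMealy I O)
    (B F : Finset T.Q) : ℕ :=
  B.card * (B.card + 1) / 2
    + ((B ×ˢ (Finset.univ : Finset I)).filter
        (fun p => (T.trans p.1 p.2).isSome = true)).card
    + ((B ×ˢ F).filter (fun p => T.Apart p.1 p.2)).card

/-- Promotion strictly increases the learner's norm: moving an isolated
frontier state `r` (apart from every basis state) into the basis increases
`N_e` by at least `1`. -/
theorem stmt17 {I O : Type} [Fintype I] (T : PMealy I O) [DecidableEq T.Q]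
    (B F : Finset T.Q) (r : T.Q)
    (hrF : r ∈ F) (hrB : r ∉ B)
    (hiso : ∀ q ∈ B, T.Apart q r) :
    normE T B F + 1 ≤ normE T (insert r B) (F.erase r) := by
  classical
  unfold normE
  set b := B.card with hb
  -- quadratic term
  have hcard : (insert r B).card = b + 1 := Finset.card_insert_of_notMem hrB
  have hquad : (insert r B).card * ((insert r B).card + 1) / 2 = b * (b + 1) / 2 + (b + 1) := by
    rw [hcard]
    obtain ⟨k, hk⟩ := Nat.even_mul_succ_self b
    have h2 : (b + 1) * (b + 1 + 1) = b * (b + 1) + 2 * (b + 1) := by ring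
    omega
  -- transition term
  have htr : ((B ×ˢ (Finset.univ : Finset I)).filter
        (fun p => (T.trans p.1 p.2).isSome = true)).card
      ≤ (((insert r B) ×ˢ (Finset.univ : Finset I)).filter
        (fun p => (T.trans p.1 p.2).isSome = true)).card := by
    apply Finset.card_le_card
    apply Finset.filter_subset_filter
    exact Finset.product_subset_product (Finset.subset_insert r B) le_rfl
  -- apartness term
  set A := (B ×ˢ F).filter (fun p => T.Apart p.1 p.2) with hA
  set A' := ((insert r B) ×ˢ (F.erase r)).filter (fun p => T.Apart p.1 p.2) with hA'
  have hap : A.card ≤ A'.card + b := by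
    have hsplit : (A.filter (fun p => p.2 = r)).card
        + (A.filter (fun p => ¬ p.2 = r)).card = A.card :=
      Finset.card_filter_add_card_filter_not (p := fun p : T.Q × T.Q => p.2 = r)
    have h1 : A.filter (fun p => ¬ p.2 = r) ⊆ A' := by
      intro p hp
      simp only [hA, Finset.mem_filter, Finset.mem_product] at hp
      simp only [hA', Finset.mem_filter, Finset.mem_product, Finset.mem_erase,
        Finset.mem_insert]
      exact ⟨⟨Or.inr hp.1.1.1, hp.2, hp.1.1.2⟩, hp.1.2⟩
    have h2 : A.filter (fun p => p.2 = r) ⊆ B ×ˢ {r} := by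
      intro p hp
      simp only [hA, Finset.mem_filter, Finset.mem_product] at hp
      simp only [Finset.mem_product, Finset.mem_singleton]
      exact ⟨hp.1.1.1, hp.2⟩
    have h2' : (A.filter (fun p => p.2 = r)).card ≤ b := by
      calc (A.filter (fun p => p.2 = r)).card ≤ (B ×ˢ ({r} : Finset T.Q)).card :=
            Finset.card_le_card h2
        _ = b := by rw [Finset.card_product, Finset.card_singleton, mul_one]
    have h1' := Finset.card_le_card h1
    omega
  rw [hquad]
  omega
end
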